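/- Let m ≥ 1 and set Γ = { e_j − e_{j+1} : 1 ≤ j ≤ m−1 } ∪ { 2e_m, 2e_{m+1} } ⊆ ℝ^{m+1}. For a signed permutation w = τ𝔠 ∈ 𝒲_{m+1} the following are equivalent: (a) w(γ) is a negative root for every γ ∈ Γ; (b) 𝔠 = {1,…,m+1} and τ(1) < τ(2) < ⋯ < τ(m). -/

import Mathlib

namespace Stmt13

/-- A positive root of type `C_{m+1}` in `ℝ^{m+1}`: `e_i - e_j` (`i < j`) or `e_i + e_j`
(`i ≤ j`). -/
def IsPosRoot {N : ℕ} (v : Fin N → ℝ) : Prop :=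
  (∃ i j : Fin N, i < j ∧ v = Pi.single i 1 - Pi.single j 1) ∨
  (∃ i j : Fin N, i ≤ j ∧ v = Pi.single i (1 : ℝ) + Pi.single j 1)

/-- A negative root: the negative of a positive root. -/
def IsNegRoot {N : ℕ} (v : Fin N → ℝ) : Prop := IsPosRoot (-v)

/-- The image `w e_i` of `e_i` under the signed permutation `w = τ𝔠`. -/
def wE {N : ℕ} (τ : Equiv.Perm (Fin N)) (c : Finset (Fin N)) (i : Fin N) : Fin N → ℝ :=
  (if i ∈ c then (-1 : ℝ) else 1) • (Pi.single (τ i) 1 : Fin N → ℝ)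

lemma pos_exists {N : ℕ} {v : Fin N → ℝ} (h : IsPosRoot v) : ∃ k, 0 < v k := by
  rcases h with ⟨i, j, hij, rfl⟩ | ⟨i, j, hij, rfl⟩
  · refine ⟨i, ?_⟩
    simp [Pi.single_apply, (hij.ne').symm, hij.ne']
  · refine ⟨i, ?_⟩
    simp only [Pi.add_apply, Pi.single_apply, if_pos rfl]
    split_ifs <;> norm_num

lemma pos_sub_iff {N : ℕ} {a b : Fin N} (hab : a ≠ b) :
    IsPosRoot (Pi.single a (1:ℝ) - Pi.single b 1) ↔ a < b := by
  constructor
  · rintro (⟨i, j, hij, hv⟩ | ⟨i, j, hij, hv⟩)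
    · have ha := congrFun hv a
      have hb := congrFun hv b
      simp only [Pi.sub_apply, Pi.single_apply, if_pos rfl, if_neg hab, if_neg hab.symm] at ha hb
      split_ifs at ha hb <;> (norm_num at ha) <;> (norm_num at hb) <;> subst_vars <;> exact hij
    · have hb := congrFun hv b
      simp only [Pi.sub_apply, Pi.add_apply, Pi.single_apply, if_pos rfl, if_neg hab.symm] at hb
      split_ifs at hb <;> norm_num at hb
  · intro h
    exact Or.inl ⟨a, b, h, rfl⟩

lemma pos_add {N : ℕ} (a b : Fin N) :
    IsPosRoot (Pi.single a (1:ℝ) + Pi.single b 1) := by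
  rcases le_total a b with h | h
  · exact Or.inr ⟨a, b, h, rfl⟩
  · exact Or.inr ⟨b, a, h, by rw [add_comm]⟩

lemma pos_two {N : ℕ} (a : Fin N) : IsPosRoot ((2:ℝ) • (Pi.single a 1 : Fin N → ℝ)) := by
  have := pos_add a a
  rwa [← two_smul ℝ] at this

lemma neg_two_of_mem {N : ℕ} (τ : Equiv.Perm (Fin N)) (c : Finset (Fin N)) {i : Fin N}
    (h : i ∈ c) : IsNegRoot ((2:ℝ) • wE τ c i) := by
  unfold IsNegRoot wE
  rw [if_pos h]
  have heq : -((2:ℝ) • ((-1:ℝ) • (Pi.single (τ i) 1 : Fin N → ℝ)))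
      = (2:ℝ) • (Pi.single (τ i) 1 : Fin N → ℝ) := by
    module
  rw [heq]
  exact pos_two _

lemma mem_of_neg_two {N : ℕ} (τ : Equiv.Perm (Fin N)) (c : Finset (Fin N)) {i : Fin N}
    (h : IsNegRoot ((2:ℝ) • wE τ c i)) : i ∈ c := by
  by_contra hc
  unfold IsNegRoot wE at h
  rw [if_neg hc, one_smul] at h
  obtain ⟨k, hk⟩ := pos_exists h
  simp only [Pi.neg_apply, Pi.smul_apply, Pi.single_apply, smul_eq_mul] at hk
  split_ifs at hk <;> norm_num at hk

lemma neg_pair_of_mem {N : ℕ} (τ : Equiv.Perm (Fin N)) (c : Finset (Fin N)) {x y : Fin N}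
    (hx : x ∈ c) (hy : y ∈ c) (h : τ x < τ y) :
    IsNegRoot (wE τ c x - wE τ c y) := by
  unfold IsNegRoot wE
  rw [if_pos hx, if_pos hy]
  have heq : -((-1:ℝ) • (Pi.single (τ x) 1 : Fin N → ℝ) - (-1:ℝ) • (Pi.single (τ y) 1 : Fin N → ℝ))
      = (Pi.single (τ x) 1 : Fin N → ℝ) - Pi.single (τ y) 1 := by
    module
  rw [heq]
  exact (pos_sub_iff h.ne).mpr h

lemma lt_of_neg_pair {N : ℕ} (τ : Equiv.Perm (Fin N)) (c : Finset (Fin N)) {x y : Fin N}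
    (hx : x ∈ c) (hy : y ∈ c) (hxy : x ≠ y)
    (h : IsNegRoot (wE τ c x - wE τ c y)) : τ x < τ y := by
  unfold IsNegRoot wE at h
  rw [if_pos hx, if_pos hy] at h
  have heq : -((-1:ℝ) • (Pi.single (τ x) 1 : Fin N → ℝ) - (-1:ℝ) • (Pi.single (τ y) 1 : Fin N → ℝ))
      = (Pi.single (τ x) 1 : Fin N → ℝ) - Pi.single (τ y) 1 := by
    module
  rw [heq] at h
  exact (pos_sub_iff (fun he => hxy (τ.injective he))).mp h

lemma mem_of_neg_pair {N : ℕ} (τ : Equiv.Perm (Fin N)) (c : Finset (Fin N)) {x y : Fin N}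
    (hy : y ∈ c) (h : IsNegRoot (wE τ c x - wE τ c y)) : x ∈ c := by
  by_contra hx
  unfold IsNegRoot wE at h
  rw [if_neg hx, if_pos hy, one_smul] at h
  have heq : -((Pi.single (τ x) 1 : Fin N → ℝ) - (-1:ℝ) • (Pi.single (τ y) 1 : Fin N → ℝ))
      = -((Pi.single (τ x) 1 : Fin N → ℝ) + Pi.single (τ y) 1) := by
    module
  rw [heq] at h
  obtain ⟨k, hk⟩ := pos_exists h
  simp only [Pi.neg_apply, Pi.add_apply, Pi.single_apply] at hk
  split_ifs at hk <;> norm_num at hk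

/-- Let `m ≥ 1` and `Γ = {e_j - e_{j+1} : 1 ≤ j ≤ m-1} ∪ {2e_m, 2e_{m+1}}`
in `ℝ^{m+1}`.  For a signed permutation `w = τ𝔠 ∈ 𝒲_{m+1}` the following are equivalent:
(a) `w γ` is a negative root for every `γ ∈ Γ`;
(b) `𝔠 = {1, …, m+1}` and `τ(1) < τ(2) < ⋯ < τ(m)` (0-indexed: `τ` is strictly increasing
on the first `m` indices). -/
theorem stmt13 (m : ℕ) (hm : 1 ≤ m) (τ : Equiv.Perm (Fin (m + 1))) (c : Finset (Fin (m + 1))) :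
    ((∀ x y : Fin (m + 1), (y : ℕ) = (x : ℕ) + 1 → (y : ℕ) < m →
        IsNegRoot (wE τ c x - wE τ c y)) ∧
      IsNegRoot ((2 : ℝ) • wE τ c ⟨m - 1, by omega⟩) ∧
      IsNegRoot ((2 : ℝ) • wE τ c ⟨m, by omega⟩)) ↔
    (c = Finset.univ ∧ ∀ x y : Fin (m + 1), x < y → (y : ℕ) < m → τ x < τ y) := by
  constructor
  · rintro ⟨hpair, h1, h2⟩
    have hm1 : (⟨m - 1, by omega⟩ : Fin (m + 1)) ∈ c := mem_of_neg_two τ c h1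
    have hm2 : (⟨m, by omega⟩ : Fin (m + 1)) ∈ c := mem_of_neg_two τ c h2
    have hdesc : ∀ d : ℕ, ∀ h : m - 1 - d < m + 1, (⟨m - 1 - d, h⟩ : Fin (m + 1)) ∈ c := by
      intro d
      induction d with
      | zero => intro h; exact hm1
      | succ d ih =>
        intro h
        have hy : m - 1 - d < m + 1 := by omega
        by_cases hd : d < m - 1
        · have hp := hpair ⟨m - 1 - (d + 1), h⟩ ⟨m - 1 - d, hy⟩ (by simp; omega) (by simp; omega)
          exact mem_of_neg_pair τ c (ih hy) hp
        · have he : (⟨m - 1 - (d + 1), h⟩ : Fin (m + 1)) = ⟨m - 1 - d, hy⟩ :=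
            Fin.mk_eq_mk.mpr (by omega)
          rw [he]; exact ih hy
    have huniv : c = Finset.univ := by
      apply Finset.eq_univ_iff_forall.mpr
      intro i
      by_cases hi : (i : ℕ) = m
      · have : i = ⟨m, by omega⟩ := Fin.ext hi
        rw [this]; exact hm2
      · have hle : (i : ℕ) ≤ m - 1 := by omega
        have h' : m - 1 - (m - 1 - (i : ℕ)) < m + 1 := by omega
        have : i = ⟨m - 1 - (m - 1 - (i : ℕ)), h'⟩ := Fin.ext (by simp only [Fin.val_mk]; omega)
        rw [this]; exact hdesc _ _
    have hcons : ∀ x y : Fin (m + 1), (y : ℕ) = (x : ℕ) + 1 → (y : ℕ) < m → τ x < τ y := by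
      intro x y hxy hym
      refine lt_of_neg_pair τ c ?_ ?_ (fun he => by rw [he] at hxy; omega) (hpair x y hxy hym)
      · rw [huniv]; exact Finset.mem_univ _
      · rw [huniv]; exact Finset.mem_univ _
    have key : ∀ d : ℕ, ∀ x y : Fin (m + 1), (y : ℕ) = (x : ℕ) + d + 1 → (y : ℕ) < m →
        τ x < τ y := by
      intro d
      induction d with
      | zero => intro x y h1 h2; exact hcons x y (by omega) h2
      | succ d ih =>
        intro x y h1 h2
        have hz : (x : ℕ) + d + 1 < m + 1 := by omega
        have := ih x ⟨(x : ℕ) + d + 1, hz⟩ (by simp) (by simp; omega)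
        exact this.trans (hcons ⟨(x : ℕ) + d + 1, hz⟩ y (by simp; omega) h2)
    refine ⟨huniv, fun x y hxy hym => ?_⟩
    have hlt : (x : ℕ) < (y : ℕ) := hxy
    exact key ((y : ℕ) - (x : ℕ) - 1) x y (by omega) hym
  · rintro ⟨hc, hmono⟩
    subst hc
    refine ⟨?_, neg_two_of_mem τ _ (Finset.mem_univ _), neg_two_of_mem τ _ (Finset.mem_univ _)⟩
    intro x y hxy hym
    exact neg_pair_of_mem τ _ (Finset.mem_univ _) (Finset.mem_univ _)
      (hmono x y (Fin.lt_def.mpr (by omega)) hym)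

end Stmt13
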